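/- Let p be a prime and k a field of characteristic p. Let V = k^{p−1} and let N be a nilpotent endomorphism of V that is a single Jordan block of size p−1 (i.e. N^{p−1} = 0 and N^{p−2} ≠ 0). Consider the endomorphism D = N ⊗ 1 + 1 ⊗ N of V ⊗_k V. Then D^p = 0, and V ⊗_k V, regarded as a module over k[X] via X ↦ D, decomposes as a direct sum of one copy of the trivial module k (on which D acts by zero) and p−2 copies of k[X]/(X^p); equivalently, D is conjugate to a nilpotent matrix in Jordan form consisting of p−2 Jordan blocks of size p and one Jordan block of size 1. -/

import Mathlib

open TensorProduct Finset

namespace Aux17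

variable {k : Type*} [Field k] (n : ℕ) (N : Module.End k (Fin n → k)) (v : Fin n → k)

/-- Jordan-chain vectors indexed by `ℤ`, zero outside `[0, n)`. -/
noncomputable def ff (m : ℤ) : Fin n → k :=
  if _ : 0 ≤ m ∧ m < (n : ℤ) then (N ^ ((n : ℤ) - 1 - m).toNat) v else 0

lemma ff_of_neg {m : ℤ} (h : m < 0) : ff n N v m = 0 := by
  rw [ff, dif_neg]; omega

lemma ff_of_ge {m : ℤ} (h : (n : ℤ) ≤ m) : ff n N v m = 0 := by
  rw [ff, dif_neg]; omega

lemma ff_shift (hN1 : N ^ n = 0) {m : ℤ} (hm : m ≤ (n : ℤ) - 1) :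
    N (ff n N v m) = ff n N v (m - 1) := by
  by_cases h0 : 0 ≤ m
  · rw [ff, dif_pos ⟨h0, by omega⟩]
    by_cases h1 : 1 ≤ m
    · rw [ff, dif_pos ⟨by omega, by omega⟩]
      have he : ((n : ℤ) - 1 - (m - 1)).toNat = ((n : ℤ) - 1 - m).toNat + 1 := by omega
      rw [he, pow_succ', Module.End.mul_apply]
    · have hm0 : m = 0 := by omega
      subst hm0
      rw [ff, dif_neg (by omega)]
      have he : ((n : ℤ) - 1 - 0).toNat + 1 = n := by omega
      have : N ((N ^ ((n : ℤ) - 1 - 0).toNat) v) = (N ^ (((n : ℤ) - 1 - 0).toNat + 1)) v := by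
        rw [pow_succ', Module.End.mul_apply]
      rw [this, he, hN1]; rfl
  · rw [ff_of_neg n N v (by omega), ff_of_neg n N v (by omega), map_zero]

lemma ff_pow_shift (hN1 : N ^ n = 0) (i : ℕ) {m : ℤ} (hm : m ≤ (n : ℤ) - 1) :
    (N ^ i) (ff n N v m) = ff n N v (m - i) := by
  induction i with
  | zero => simp
  | succ j ih =>
    have h2 : (N ^ (j + 1)) (ff n N v m) = N ((N ^ j) (ff n N v m)) := by
      rw [pow_succ', Module.End.mul_apply]
    rw [h2, ih, ff_shift n N v hN1 (by omega)]
    have : m - (j : ℤ) - 1 = m - ((j : ℕ) + 1 : ℕ) := by push_cast; ring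
    rw [this]

/-- Pure-tensor "monomials". -/
noncomputable def gg (a c : ℤ) : (Fin n → k) ⊗[k] (Fin n → k) :=
  ff n N v a ⊗ₜ[k] ff n N v c

/-- The operator `D = N ⊗ 1 + 1 ⊗ N`. -/
noncomputable def DD : Module.End k ((Fin n → k) ⊗[k] (Fin n → k)) :=
  LinearMap.rTensor (Fin n → k) N + LinearMap.lTensor (Fin n → k) N

lemma gg_zero_left {a : ℤ} (c : ℤ) (h : a < 0 ∨ (n : ℤ) ≤ a) : gg n N v a c = 0 := by
  rw [gg]
  rcases h with h | h
  · rw [ff_of_neg n N v h, TensorProduct.zero_tmul]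
  · rw [ff_of_ge n N v h, TensorProduct.zero_tmul]

lemma gg_zero_right (a : ℤ) {c : ℤ} (h : c < 0 ∨ (n : ℤ) ≤ c) : gg n N v a c = 0 := by
  rw [gg]
  rcases h with h | h
  · rw [ff_of_neg n N v h, TensorProduct.tmul_zero]
  · rw [ff_of_ge n N v h, TensorProduct.tmul_zero]

lemma rT_pow (i : ℕ) (x y : Fin n → k) :
    ((LinearMap.rTensor (Fin n → k) N) ^ i) (x ⊗ₜ[k] y) = (N ^ i) x ⊗ₜ[k] y := by
  induction i with
  | zero => simp
  | succ j ih =>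
    rw [pow_succ', Module.End.mul_apply, ih, LinearMap.rTensor_tmul, pow_succ',
      Module.End.mul_apply]

lemma lT_pow (i : ℕ) (x y : Fin n → k) :
    ((LinearMap.lTensor (Fin n → k) N) ^ i) (x ⊗ₜ[k] y) = x ⊗ₜ[k] (N ^ i) y := by
  induction i with
  | zero => simp
  | succ j ih =>
    rw [pow_succ', Module.End.mul_apply, ih, LinearMap.lTensor_tmul, pow_succ',
      Module.End.mul_apply]

lemma comm_rl : Commute (LinearMap.rTensor (Fin n → k) N) (LinearMap.lTensor (Fin n → k) N) := by
  rw [Commute, SemiconjBy]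
  ext x y
  simp

lemma Dg (hN1 : N ^ n = 0) {a c : ℤ} (ha : a ≤ (n : ℤ) - 1) (hc : c ≤ (n : ℤ) - 1) :
    DD n N (gg n N v a c) = gg n N v (a - 1) c + gg n N v a (c - 1) := by
  rw [DD, gg, LinearMap.add_apply, LinearMap.rTensor_tmul, LinearMap.lTensor_tmul,
    ff_shift n N v hN1 ha, ff_shift n N v hN1 hc, gg, gg]

lemma D_pow_apply (hN1 : N ^ n = 0) (t : ℕ) {a c : ℤ} (ha : a ≤ (n : ℤ) - 1)
    (hc : c ≤ (n : ℤ) - 1) :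
    ((DD n N) ^ t) (gg n N v a c) =
      ∑ i ∈ range (t + 1), ((t.choose i : k)) • gg n N v (a - i) (c - (t - i : ℕ)) := by
  rw [DD, (comm_rl n N).add_pow, LinearMap.sum_apply]
  refine Finset.sum_congr rfl fun i hi => ?_
  rw [Module.End.mul_apply, Module.End.mul_apply, Module.End.natCast_apply, map_nsmul, map_nsmul,
    gg, lT_pow, rT_pow, ff_pow_shift n N v hN1 _ hc, ff_pow_shift n N v hN1 _ ha,
    ← Nat.cast_smul_eq_nsmul k]
  rfl

lemma hockey (i : ℕ) : ∀ (M : ℕ), (∑ t ∈ range M, (t.choose i)) = M.choose (i + 1) := by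
  intro M
  induction M with
  | zero => simp
  | succ m ih =>
    rw [Finset.sum_range_succ, ih, Nat.choose_succ_succ']
    omega

lemma D_pow_zero (hp : (n + 1).Prime) [CharP k (n + 1)] (hN1 : N ^ n = 0) :
    (DD n N) ^ (n + 1) = 0 := by
  have hN1' : N ^ (n + 1) = 0 := pow_eq_zero_of_le (Nat.le_succ n) hN1
  apply TensorProduct.ext'
  intro x y
  rw [DD, (comm_rl n N).add_pow, LinearMap.sum_apply, LinearMap.zero_apply]
  refine Finset.sum_eq_zero fun i hi => ?_
  rw [Module.End.mul_apply, Module.End.mul_apply, Module.End.natCast_apply, map_nsmul, map_nsmul,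
    lT_pow, rT_pow, ← Nat.cast_smul_eq_nsmul k]
  rcases Nat.eq_zero_or_pos i with h0 | h0
  · subst h0
    rw [Nat.sub_zero, hN1', LinearMap.zero_apply, TensorProduct.tmul_zero, smul_zero]
  rcases eq_or_lt_of_le (Nat.lt_succ_iff.mp (Finset.mem_range.mp hi)) with htop | hmid
  · rw [htop, hN1', LinearMap.zero_apply, TensorProduct.zero_tmul, smul_zero]
  · have hdvd : (n + 1) ∣ (n + 1).choose i := Nat.Prime.dvd_choose_self hp (by omega) hmid
    have : ((n + 1).choose i : k) = 0 := (CharP.cast_eq_zero_iff k (n + 1) _).mpr hdvd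
    rw [this, zero_smul]

/-- The socle generator. -/
noncomputable def uu : (Fin n → k) ⊗[k] (Fin n → k) :=
  ∑ t ∈ range n, ((DD n N) ^ t) (gg n N v ((n : ℤ) - 1) (t : ℤ))

lemma D_uu (hp : (n + 1).Prime) [CharP k (n + 1)] (hN1 : N ^ n = 0) :
    DD n N (uu n N v) = 0 := by
  rw [uu, map_sum]
  have expand : ∀ t ∈ range n,
      DD n N (((DD n N) ^ t) (gg n N v ((n : ℤ) - 1) (t : ℤ))) =
        ∑ i ∈ range (n + 1), (((t + 1).choose i : k)) • gg n N v ((n : ℤ) - 1 - i) ((i : ℤ) - 1) := by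
    intro t ht
    have ht' : t < n := Finset.mem_range.mp ht
    have h1 : DD n N (((DD n N) ^ t) (gg n N v ((n : ℤ) - 1) (t : ℤ))) =
        ((DD n N) ^ (t + 1)) (gg n N v ((n : ℤ) - 1) (t : ℤ)) := by
      rw [pow_succ', Module.End.mul_apply]
    rw [h1, D_pow_apply n N v hN1 (t + 1) (by omega) (by push_cast; omega)]
    rw [← Finset.sum_subset (Finset.range_subset_range.mpr (by omega : t + 1 + 1 ≤ n + 1))]
    · refine Finset.sum_congr rfl fun i hi => ?_
      have hi' : i ≤ t + 1 := by have := Finset.mem_range.mp hi; omega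
      congr 2
      have : (t + 1 - i : ℕ) = ((t : ℤ) + 1 - i).toNat := by omega
      rw [this]
      omega
    · intro i hi hni
      have : t + 1 < i := by
        have := Finset.mem_range.mp hi
        simp only [Finset.mem_range] at hni
        omega
      rw [Nat.choose_eq_zero_of_lt this, Nat.cast_zero, zero_smul]
  rw [Finset.sum_congr rfl expand, Finset.sum_comm]
  refine Finset.sum_eq_zero fun i hi => ?_
  have hi' : i < n + 1 := Finset.mem_range.mp hi
  rw [← Finset.sum_smul]
  rcases Nat.eq_zero_or_pos i with h0 | h0
  · subst h0
    rw [gg_zero_right n N v _ (Or.inl (by omega)), smul_zero]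
  rcases eq_or_lt_of_le (Nat.lt_succ_iff.mp hi') with htop | hmid
  · rw [gg_zero_left n N v _ (Or.inl (by omega)), smul_zero]
  · have hsum : (∑ t ∈ range n, ((t + 1).choose i)) = (n + 1).choose (i + 1) := by
      have h2 := Finset.sum_range_succ' (fun m => m.choose i) n
      rw [hockey] at h2
      have h3 : Nat.choose 0 i = 0 := Nat.choose_eq_zero_of_lt h0
      omega
    have hdvd : (n + 1) ∣ (n + 1).choose (i + 1) :=
      Nat.Prime.dvd_choose_self hp (by omega) (by omega)
    have hz : ((∑ t ∈ range n, ((t + 1).choose i) : ℕ) : k) = 0 := by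
      rw [hsum]
      exact (CharP.cast_eq_zero_iff k (n + 1) _).mpr hdvd
    rw [← Nat.cast_sum] at *
    rw [hz, zero_smul]

/-- Chain tops. -/
noncomputable def yy (b : ℕ) : (Fin n → k) ⊗[k] (Fin n → k) :=
  gg n N v ((n : ℤ) - 1) ((n : ℤ) - 1 - b)

/-- The chain vectors. -/
noncomputable def vv (b : Fin (n - 1)) (i : Fin (n + 1)) : (Fin n → k) ⊗[k] (Fin n → k) :=
  ((DD n N) ^ (n - (i : ℕ))) (yy n N v (b : ℕ))

/-- The model map. -/
noncomputable def Phi : (k × (Fin (n - 1) → Fin (n + 1) → k)) →ₗ[k]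
    ((Fin n → k) ⊗[k] (Fin n → k)) where
  toFun z := z.1 • uu n N v + ∑ b, ∑ i, z.2 b i • vv n N v b i
  map_add' z w := by
    simp only [Prod.fst_add, Prod.snd_add, Pi.add_apply, add_smul, Finset.sum_add_distrib]
    abel
  map_smul' a z := by
    simp only [Prod.smul_fst, Prod.smul_snd, Pi.smul_apply, smul_eq_mul, mul_smul,
      RingHom.id_apply, ← Finset.smul_sum, smul_add]

/-- The Jordan model operator. -/
noncomputable def J : (k × (Fin (n - 1) → Fin (n + 1) → k)) →ₗ[k]
    (k × (Fin (n - 1) → Fin (n + 1) → k)) where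
  toFun z := (0, fun b i => if h : (i : ℕ) + 1 < n + 1 then z.2 b ⟨(i : ℕ) + 1, h⟩ else 0)
  map_add' z w := by
    refine Prod.ext (by simp) ?_
    funext b i
    simp only [Prod.snd_add, Pi.add_apply]
    split_ifs <;> simp
  map_smul' a z := by
    refine Prod.ext (by simp) ?_
    funext b i
    simp only [Prod.smul_snd, Pi.smul_apply, smul_eq_mul, RingHom.id_apply]
    split_ifs <;> simp

lemma Phi_uu : Phi n N v (1, 0) = uu n N v := by
  simp [Phi]

lemma Phi_single (b : Fin (n - 1)) (i : Fin (n + 1)) :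
    Phi n N v (0, Pi.single b (Pi.single i (1 : k))) = vv n N v b i := by
  simp only [Phi, LinearMap.coe_mk, AddHom.coe_mk, zero_smul, zero_add]
  rw [Finset.sum_eq_single b]
  · rw [Finset.sum_eq_single i]
    · rw [Pi.single_eq_same, Pi.single_eq_same, one_smul]
    · intro j _ hj
      rw [Pi.single_eq_same, Pi.single_eq_of_ne hj, zero_smul]
    · intro h; exact absurd (Finset.mem_univ i) h
  · intro b' _ hb'
    rw [Pi.single_eq_of_ne hb']
    simp
  · intro h; exact absurd (Finset.mem_univ b) h

lemma D_vv_zero (hp : (n + 1).Prime) [CharP k (n + 1)] (hN1 : N ^ n = 0) (b : Fin (n - 1)) :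
    DD n N (vv n N v b 0) = 0 := by
  rw [vv]
  have : DD n N (((DD n N) ^ (n - (0 : ℕ))) (yy n N v b)) =
      ((DD n N) ^ (n + 1)) (yy n N v b) := by
    rw [Nat.sub_zero, pow_succ', Module.End.mul_apply]
  rw [show ((0 : Fin (n+1)) : ℕ) = 0 from rfl, this, D_pow_zero n N hp hN1, LinearMap.zero_apply]

lemma D_vv_succ (i : Fin n) (b : Fin (n - 1)) :
    DD n N (vv n N v b i.succ) = vv n N v b i.castSucc := by
  rw [vv, vv]
  have h1 : (i.castSucc : ℕ) = (i : ℕ) := rfl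
  have h2 : (i.succ : ℕ) = (i : ℕ) + 1 := rfl
  rw [h1, h2]
  have h3 : n - (i : ℕ) = (n - ((i : ℕ) + 1)) + 1 := by omega
  rw [h3, pow_succ', Module.End.mul_apply]

lemma intertwine (hp : (n + 1).Prime) [CharP k (n + 1)] (hN1 : N ^ n = 0)
    (z : k × (Fin (n - 1) → Fin (n + 1) → k)) :
    DD n N (Phi n N v z) = Phi n N v (J n z) := by
  obtain ⟨c, h⟩ := z
  simp only [Phi, J, LinearMap.coe_mk, AddHom.coe_mk, map_add, map_smul, map_sum,
    D_uu n N v hp hN1, smul_zero, zero_add, zero_smul]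
  refine Finset.sum_congr rfl fun b _ => ?_
  rw [Fin.sum_univ_succ, Fin.sum_univ_castSucc]
  rw [D_vv_zero n N v hp hN1 b, smul_zero, zero_add]
  have hlast : ¬ ((Fin.last n : Fin (n + 1)) : ℕ) + 1 < n + 1 := by
    simp [Fin.last]
  rw [dif_neg hlast, zero_smul, add_zero]
  refine Finset.sum_congr rfl fun i _ => ?_
  rw [D_vv_succ n N v i b]
  have hi : ((i.castSucc : Fin (n + 1)) : ℕ) + 1 < n + 1 := by
    simp [Fin.castSucc]
  rw [dif_pos hi]
  congr 2

lemma w_indep (hN1 : N ^ n = 0) (hv : (N ^ (n - 1)) v ≠ 0) :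
    LinearIndependent k (fun i : Fin n => (N ^ (n - 1 - (i : ℕ))) v) := by
  rw [Fintype.linearIndependent_iff]
  intro a ha
  by_contra hcon
  push_neg at hcon
  obtain ⟨i0, hi0⟩ := hcon
  classical
  have hne : (Finset.univ.filter (fun i : Fin n => a i ≠ 0)).Nonempty := ⟨i0, by simp [hi0]⟩
  set j := (Finset.univ.filter (fun i : Fin n => a i ≠ 0)).max' hne with hjdef
  have hj : a j ≠ 0 := by
    have h := (Finset.univ.filter (fun i : Fin n => a i ≠ 0)).max'_mem hne
    rw [Finset.mem_filter] at h
    exact h.2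
  have h2 : (N ^ (j : ℕ)) (∑ i, a i • (N ^ (n - 1 - (i : ℕ))) v) = 0 := by
    rw [ha, map_zero]
  rw [map_sum] at h2
  have h3 : ∀ i : Fin n,
      (N ^ (j : ℕ)) (a i • (N ^ (n - 1 - (i : ℕ))) v) =
        a i • (N ^ ((j : ℕ) + (n - 1 - (i : ℕ)))) v := by
    intro i
    rw [map_smul, pow_add, Module.End.mul_apply]
  rw [Finset.sum_congr rfl fun i _ => h3 i, Finset.sum_eq_single j] at h2
  · have hexp : (j : ℕ) + (n - 1 - (j : ℕ)) = n - 1 := by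
      have := j.isLt; omega
    rw [hexp] at h2
    rcases smul_eq_zero.mp h2 with h | h
    · exact hj h
    · exact hv h
  · intro i _ hij
    by_cases hai : a i = 0
    · rw [hai, zero_smul]
    · have his : i ∈ Finset.univ.filter (fun i : Fin n => a i ≠ 0) := by
        rw [Finset.mem_filter]; exact ⟨Finset.mem_univ i, hai⟩
      have hile : i ≤ j := (Finset.univ.filter (fun i : Fin n => a i ≠ 0)).le_max' i his
      have hlt : (i : ℕ) < (j : ℕ) := by
        rcases lt_or_eq_of_le hile with h | h
        · exact h
        · exact absurd h hij
      have hexp : n ≤ (j : ℕ) + (n - 1 - (i : ℕ)) := by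
        have := i.isLt; omega
      rw [pow_eq_zero_of_le hexp hN1, LinearMap.zero_apply, smul_zero]
  · intro h; exact absurd (Finset.mem_univ j) h

lemma ff_coe (i : Fin n) : ff n N v (i : ℤ) = (N ^ (n - 1 - (i : ℕ))) v := by
  rw [ff, dif_pos ⟨by omega, by exact_mod_cast i.isLt⟩]
  have : ((n : ℤ) - 1 - (i : ℤ)).toNat = n - 1 - (i : ℕ) := by omega
  rw [this]

lemma span_w (hn : 0 < n) (hN1 : N ^ n = 0) (hv : (N ^ (n - 1)) v ≠ 0) :
    Submodule.span k (Set.range (fun i : Fin n => (N ^ (n - 1 - (i : ℕ))) v)) = ⊤ := by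
  haveI : Nonempty (Fin n) := ⟨⟨0, hn⟩⟩
  have hcard : Fintype.card (Fin n) = Module.finrank k (Fin n → k) := by
    simp [Module.finrank_fin_fun]
  exact (w_indep n N v hN1 hv).span_eq_top_of_card_eq_finrank hcard

lemma surj (hn : 0 < n) (hp : (n + 1).Prime) [CharP k (n + 1)] (hN1 : N ^ n = 0)
    (hv : (N ^ (n - 1)) v ≠ 0) : Function.Surjective (Phi n N v) := by
  rw [← LinearMap.range_eq_top, Submodule.eq_top_iff']
  set S := LinearMap.range (Phi n N v) with hS
  have htop : ∀ z, z ∈ S := by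
    have hDS : ∀ x ∈ S, DD n N x ∈ S := by
      rintro x ⟨z, rfl⟩
      exact ⟨J n z, (intertwine n N v hp hN1 z).symm⟩
    have hDpowS : ∀ (j : ℕ), ∀ x ∈ S, ((DD n N) ^ j) x ∈ S := by
      intro j
      induction j with
      | zero => intro x hx; simpa using hx
      | succ m ih =>
        intro x hx
        rw [pow_succ, Module.End.mul_apply]
        exact ih _ (hDS x hx)
    have hu : uu n N v ∈ S := ⟨(1, 0), Phi_uu n N v⟩
    have hvv : ∀ b i, vv n N v b i ∈ S := fun b i => ⟨_, Phi_single n N v b i⟩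
    have hrow1 : ∀ c : ℤ, 1 ≤ c → gg n N v ((n : ℤ) - 1) c ∈ S := by
      intro c hc
      rcases le_or_gt (n : ℤ) c with h | h
      · rw [gg_zero_right n N v _ (Or.inr h)]; exact S.zero_mem
      · have hb : ((n : ℤ) - 1 - c).toNat < n - 1 := by omega
        have := hvv ⟨((n : ℤ) - 1 - c).toNat, hb⟩ (Fin.last n)
        rw [vv] at this
        have hl : n - ((Fin.last n : Fin (n + 1)) : ℕ) = 0 := by simp
        rw [hl, pow_zero, Module.End.one_apply, yy] at this
        have heq : ((n : ℤ) - 1) - ((((n : ℤ) - 1 - c).toNat : ℕ) : ℤ) = c := by omega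
        rw [heq] at this
        exact this
    have hrow : ∀ c : ℤ, gg n N v ((n : ℤ) - 1) c ∈ S := by
      intro c
      rcases lt_trichotomy c 0 with hc | hc | hc
      · rw [gg_zero_right n N v _ (Or.inl hc)]; exact S.zero_mem
      · subst hc
        have hdec : gg n N v ((n : ℤ) - 1) 0 =
            uu n N v - ∑ t ∈ (range n).erase 0,
              ((DD n N) ^ t) (gg n N v ((n : ℤ) - 1) (t : ℤ)) := by
          rw [uu, ← Finset.sum_erase_add _ _ (Finset.mem_range.mpr hn)]
          simp
        rw [hdec]
        refine sub_mem hu (Submodule.sum_mem _ fun t ht => ?_)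
        have ht' : t ≠ 0 ∧ t < n := by
          rw [Finset.mem_erase, Finset.mem_range] at ht; exact ht
        exact hDpowS t _ (hrow1 (t : ℤ) (by exact_mod_cast Nat.one_le_iff_ne_zero.mpr ht'.1))
      · exact hrow1 c hc
    have gcol : ∀ (A : ℕ) (c : ℤ), gg n N v ((n : ℤ) - 1 - A) c ∈ S := by
      intro A
      induction A with
      | zero => simpa using hrow
      | succ A ih =>
        intro c
        rcases le_or_gt (n : ℤ) c with h | h
        · rw [gg_zero_right n N v _ (Or.inr h)]; exact S.zero_mem
        rcases le_or_gt ((n : ℤ) - 1 - (A + 1 : ℕ)) (-1) with h2 | h2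
        · rw [gg_zero_left n N v _ (Or.inl (by omega))]; exact S.zero_mem
        · have hD := Dg n N v hN1 (a := (n : ℤ) - 1 - A) (c := c) (by omega) (by omega)
          have hre : gg n N v ((n : ℤ) - 1 - (A + 1 : ℕ)) c =
              DD n N (gg n N v ((n : ℤ) - 1 - A) c) - gg n N v ((n : ℤ) - 1 - A) (c - 1) := by
            rw [hD]
            have : (n : ℤ) - 1 - A - 1 = (n : ℤ) - 1 - (A + 1 : ℕ) := by push_cast; ring
            rw [this]
            abel
          rw [hre]
          exact sub_mem (hDS _ (ih c)) (ih (c - 1))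
    have hall : ∀ a c : ℤ, gg n N v a c ∈ S := by
      intro a c
      rcases lt_or_ge a 0 with h | h
      · rw [gg_zero_left n N v _ (Or.inl h)]; exact S.zero_mem
      rcases le_or_gt (n : ℤ) a with h2 | h2
      · rw [gg_zero_left n N v _ (Or.inr h2)]; exact S.zero_mem
      · have : a = (n : ℤ) - 1 - ((((n : ℤ) - 1 - a).toNat : ℕ) : ℤ) := by omega
        rw [this]
        exact gcol _ c
    have hspan := span_w n N v hn hN1 hv
    have hw : ∀ (i : Fin n) (y : Fin n → k), ((N ^ (n - 1 - (i : ℕ))) v) ⊗ₜ[k] y ∈ S := by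
      intro i y
      have hy : y ∈ Submodule.span k
          (Set.range (fun i : Fin n => (N ^ (n - 1 - (i : ℕ))) v)) := by
        rw [hspan]; trivial
      refine Submodule.span_induction
        (p := fun y _ => ((N ^ (n - 1 - (i : ℕ))) v) ⊗ₜ[k] y ∈ S) ?_ ?_ ?_ ?_ hy
      · rintro _ ⟨j, rfl⟩
        have := hall (i : ℤ) (j : ℤ)
        rwa [gg, ff_coe, ff_coe] at this
      · simpa using S.zero_mem
      · intro x y _ _ hx hy'
        rw [TensorProduct.tmul_add]; exact S.add_mem hx hy'
      · intro a x _ hx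
        rw [TensorProduct.tmul_smul]; exact S.smul_mem a hx
    have hpure : ∀ x y : Fin n → k, x ⊗ₜ[k] y ∈ S := by
      intro x y
      have hx : x ∈ Submodule.span k
          (Set.range (fun i : Fin n => (N ^ (n - 1 - (i : ℕ))) v)) := by
        rw [hspan]; trivial
      refine Submodule.span_induction (p := fun x _ => x ⊗ₜ[k] y ∈ S) ?_ ?_ ?_ ?_ hx
      · rintro _ ⟨i, rfl⟩
        exact hw i y
      · simpa using S.zero_mem
      · intro x₁ x₂ _ _ h1 h2
        rw [TensorProduct.add_tmul]; exact S.add_mem h1 h2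
      · intro a x₁ _ h1
        rw [← TensorProduct.smul_tmul']; exact S.smul_mem a h1
    intro z
    induction z using TensorProduct.induction_on with
    | zero => exact S.zero_mem
    | tmul x y => exact hpure x y
    | add x y hx hy => exact S.add_mem hx hy
  exact htop

lemma finrank_eq (hn : 0 < n) :
    Module.finrank k (k × (Fin (n - 1) → Fin (n + 1) → k)) =
      Module.finrank k ((Fin n → k) ⊗[k] (Fin n → k)) := by
  rw [Module.finrank_prod, Module.finrank_self, Module.finrank_tensorProduct,
    Module.finrank_fin_fun, Module.finrank_pi_fintype]
  have : ∀ b : Fin (n - 1), Module.finrank k (Fin (n + 1) → k) = n + 1 := fun _ =>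
    Module.finrank_fin_fun k
  rw [Finset.sum_congr rfl fun b _ => this b, Finset.sum_const, Finset.card_univ,
    Fintype.card_fin, smul_eq_mul]
  obtain ⟨m, rfl⟩ : ∃ m, n = m + 1 := ⟨n - 1, by omega⟩
  simp
  ring

attribute [irreducible] Phi

set_option maxHeartbeats 1000000 in
lemma bij (hn : 0 < n) (hp : (n + 1).Prime) [CharP k (n + 1)] (hN1 : N ^ n = 0)
    (hv : (N ^ (n - 1)) v ≠ 0) : Function.Bijective (Phi n N v) := by
  have hsurj := surj n N v hn hp hN1 hv
  obtain ⟨ψ⟩ := FiniteDimensional.nonempty_linearEquiv_of_finrank_eq (finrank_eq n (k := k) hn)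
  haveI : FiniteDimensional k ((Fin n → k) ⊗[k] (Fin n → k)) := by infer_instance
  have hFsurj : Function.Surjective (Phi n N v ∘ₗ ψ.symm.toLinearMap) :=
    hsurj.comp ψ.symm.surjective
  have hFinj : Function.Injective (Phi n N v ∘ₗ (ψ.symm : _ →ₗ[k] _)) :=
    LinearMap.injective_iff_surjective.mpr hFsurj
  have hinj : Function.Injective (Phi n N v) := by
    intro a b hab
    have : (Phi n N v ∘ₗ (ψ.symm : _ →ₗ[k] _)) (ψ a) = (Phi n N v ∘ₗ (ψ.symm : _ →ₗ[k] _)) (ψ b) := by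
      simp [hab]
    exact ψ.injective (hFinj this)
  exact ⟨hinj, hsurj⟩

end Aux17

open Aux17

/-- Let `p` be prime, `k` a field of characteristic `p`, `V = k^{p-1}`, and
`N` a nilpotent endomorphism of `V` forming a single Jordan block of size `p-1` (i.e.
`N^{p-1} = 0` and `N^{p-2} ≠ 0`). Let `D = N ⊗ 1 + 1 ⊗ N` on `V ⊗ V`. Then `D^p = 0`, and
there is a basis in which `D` is a nilpotent Jordan matrix with one block of size `1` and
`p-2` blocks of size `p`: there is a `k`-linear equivalence
`e : V ⊗ V ≃ k × (Fin (p-2) → (Fin p → k))` under which `D` becomes `0` on the `k`-factor and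
the shift (size-`p` nilpotent Jordan block) on each of the `p-2` remaining blocks. -/
theorem tensor_square_jordan_decomposition (p : ℕ) (hp : p.Prime)
    (k : Type*) [Field k] [CharP k p]
    (N : Module.End k (Fin (p - 1) → k))
    (hN1 : N ^ (p - 1) = 0) (hN2 : N ^ (p - 2) ≠ 0) :
    ((LinearMap.rTensor (Fin (p - 1) → k) N + LinearMap.lTensor (Fin (p - 1) → k) N :
        Module.End k ((Fin (p - 1) → k) ⊗[k] (Fin (p - 1) → k))) ^ p = 0) ∧
    ∃ e : ((Fin (p - 1) → k) ⊗[k] (Fin (p - 1) → k)) ≃ₗ[k] (k × (Fin (p - 2) → Fin p → k)),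
      ∀ x : (Fin (p - 1) → k) ⊗[k] (Fin (p - 1) → k),
        e ((LinearMap.rTensor (Fin (p - 1) → k) N + LinearMap.lTensor (Fin (p - 1) → k) N) x) =
          ((0 : k), fun b (i : Fin p) =>
            if h : (i : ℕ) + 1 < p then (e x).2 b ⟨(i : ℕ) + 1, h⟩ else 0) := by
  obtain ⟨n, rfl⟩ : ∃ n, p = n + 1 := ⟨p - 1, (Nat.succ_pred_eq_of_pos hp.pos).symm⟩
  have hn : 0 < n := by have := hp.two_le; omega
  have hN1' : N ^ n = 0 := hN1
  have hv : ∃ v : Fin n → k, (N ^ (n - 1)) v ≠ 0 := by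
    by_contra h
    push_neg at h
    exact hN2 (LinearMap.ext fun w => h w)
  obtain ⟨v, hv⟩ := hv
  have hbij := bij n N v hn hp hN1' hv
  refine ⟨D_pow_zero n N hp hN1', ?_⟩
  set E := LinearEquiv.ofBijective (Phi n N v) hbij with hE
  refine ⟨E.symm, fun x => ?_⟩
  have h1 : Phi n N v (E.symm x) = x := by
    have := E.apply_symm_apply x
    rwa [LinearEquiv.ofBijective_apply] at this
  have h2 : DD n N x = Phi n N v (J n (E.symm x)) := by
    rw [← h1, intertwine n N v hp hN1' (E.symm x), h1]
  have h3 : E.symm (DD n N x) = J n (E.symm x) := by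
    rw [h2]
    exact E.symm_apply_eq.mpr (LinearEquiv.ofBijective_apply _ _).symm
  exact h3
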